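/- arXiv:2507.06619 — 3 statements merged into one kernel-verified Lean document; each statement's English description precedes it below -/
import Mathlib

section
/- For real numbers m₁, m₂, a variance v > 0, and α > 1, the Rényi divergence of order α between the real Gaussian measures N(m₁, v) and N(m₂, v) equals α · (m₁ − m₂)² / (2v). -/
open MeasureTheory Real ProbabilityTheory

/-- The Rényi divergence of order `α` between two measures:
`D_α(μ‖ν) = (1/(α−1)) · log ∫ (dμ/dν)^α dν`. -/
noncomputable def renyiDiv {X : Type*} [MeasurableSpace X] (α : ℝ) (μ ν : Measure X) : ℝ :=
  (α - 1)⁻¹ * Real.log (∫ x, (μ.rnDeriv ν x).toReal ^ α ∂ν)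

lemma gaussian_pointwise (m₁ m₂ : ℝ) (v : NNReal) (hv : 0 < v) (α : ℝ) (x : ℝ) :
    gaussianPDFReal m₂ v x * ((gaussianPDFReal m₂ v x)⁻¹ * gaussianPDFReal m₁ v x) ^ α
      = gaussianPDFReal (α * m₁ + (1 - α) * m₂) v x
        * Real.exp (α * (α - 1) * (m₁ - m₂) ^ 2 / (2 * v)) := by
  have hvR : (0:ℝ) < (v:ℝ) := hv
  have hs : (0:ℝ) < Real.sqrt (2 * π * v) := by positivity
  simp only [gaussianPDFReal, one_div]
  set s : ℝ := Real.sqrt (2 * π * v)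
  have h1 : (s⁻¹ * Real.exp (-(x - m₂)^2 / (2 * v)))⁻¹
      * (s⁻¹ * Real.exp (-(x - m₁)^2 / (2 * v)))
      = Real.exp (-(x - m₁)^2 / (2 * v) - (-(x - m₂)^2 / (2 * v))) := by
    rw [Real.exp_sub]
    field_simp
  rw [h1, ← Real.exp_mul, mul_assoc, ← Real.exp_add, mul_assoc, ← Real.exp_add]
  congr 1
  field_simp
  ring

/-- The Rényi divergence of order `α > 1` between two real Gaussians of equal variance `v > 0`
is `α (m₁ − m₂)² / (2v)`. -/
theorem renyiDiv_gaussianReal (m₁ m₂ : ℝ) (v : NNReal) (hv : 0 < v) (α : ℝ) (hα : 1 < α) :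
    renyiDiv α (gaussianReal m₁ v) (gaussianReal m₂ v) = α * (m₁ - m₂) ^ 2 / (2 * (v : ℝ)) := by
  have hv0 : v ≠ 0 := hv.ne'
  have hvR : (0:ℝ) < (v:ℝ) := hv
  have hα1 : α - 1 ≠ 0 := sub_ne_zero.mpr hα.ne'
  set C : ℝ := α * (α - 1) * (m₁ - m₂) ^ 2 / (2 * v) with hC
  -- the Radon–Nikodym derivative is the ratio of the densities
  have hrn : (gaussianReal m₁ v).rnDeriv (gaussianReal m₂ v) =ᵐ[volume]
      fun x => (gaussianPDF m₂ v x)⁻¹ * gaussianPDF m₁ v x := by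
    rw [gaussianReal_of_var_ne_zero m₂ hv0]
    have h1 := Measure.rnDeriv_withDensity_right (gaussianReal m₁ v) volume
      (measurable_gaussianPDF m₂ v).aemeasurable
      (ae_of_all _ fun x => by
        simp only [gaussianPDF_def, ne_eq, ENNReal.ofReal_eq_zero, not_le]
        exact gaussianPDFReal_pos m₂ v x hv0)
      (ae_of_all _ fun x => ENNReal.ofReal_ne_top)
    have h2 := rnDeriv_gaussianReal m₁ v
    filter_upwards [h1, h2] with x hx1 hx2
    rw [hx1, hx2]
  have hac : gaussianReal m₂ v ≪ volume := gaussianReal_absolutelyContinuous m₂ hv0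
  have hrn' := hac.ae_le hrn
  have hae : (fun x => (((gaussianReal m₁ v).rnDeriv (gaussianReal m₂ v)) x).toReal ^ α)
      =ᵐ[gaussianReal m₂ v]
      fun x => ((gaussianPDFReal m₂ v x)⁻¹ * gaussianPDFReal m₁ v x) ^ α := by
    filter_upwards [hrn'] with x hx
    rw [hx, ENNReal.toReal_mul, ENNReal.toReal_inv, gaussianPDF_def, gaussianPDF_def,
      ENNReal.toReal_ofReal (gaussianPDFReal_nonneg m₂ v x),
      ENNReal.toReal_ofReal (gaussianPDFReal_nonneg m₁ v x)]
  have hint : (∫ x, ((gaussianReal m₁ v).rnDeriv (gaussianReal m₂ v) x).toReal ^ α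
      ∂(gaussianReal m₂ v)) = Real.exp C := by
    rw [integral_congr_ae hae, gaussianReal_of_var_ne_zero m₂ hv0]
    have hpdf : gaussianPDF m₂ v
        = fun x => ((gaussianPDFReal m₂ v x).toNNReal : ENNReal) := by
      funext x; rw [gaussianPDF_def]; rfl
    rw [hpdf, integral_withDensity_eq_integral_smul
      (measurable_gaussianPDFReal m₂ v).real_toNNReal]
    have hpt : ∀ x : ℝ, (gaussianPDFReal m₂ v x).toNNReal
        • (((gaussianPDFReal m₂ v x)⁻¹ * gaussianPDFReal m₁ v x) ^ α)
        = gaussianPDFReal (α * m₁ + (1 - α) * m₂) v x * Real.exp C := by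
      intro x
      rw [NNReal.smul_def, smul_eq_mul, Real.coe_toNNReal _ (gaussianPDFReal_nonneg m₂ v x)]
      exact gaussian_pointwise m₁ m₂ v hv α x
    simp_rw [hpt]
    rw [integral_mul_const, integral_gaussianPDFReal_eq_one _ hv0, one_mul]
  rw [renyiDiv, hint, Real.log_exp, hC]
  field_simp
end

section
/- Let s > 0 be a sensitivity bound, σ > 0 a noise multiplier, and α > 1. For any real numbers m₁, m₂ with |m₁ − m₂| ≤ s, the Rényi divergence of order α between the Gaussian measures N(m₁, s²σ²) and N(m₂, s²σ²) is at most α/(2σ²). -/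
open MeasureTheory Real ProbabilityTheory

lemma rnDeriv_gaussian_gaussian (m₁ m₂ : ℝ) {v : NNReal} (hv : v ≠ 0) :
    (gaussianReal m₁ v).rnDeriv (gaussianReal m₂ v)
      =ᵐ[gaussianReal m₂ v]
      fun x => ENNReal.ofReal (gaussianPDFReal m₁ v x / gaussianPDFReal m₂ v x) := by
  have hf : Measurable fun x => ENNReal.ofReal (gaussianPDFReal m₁ v x / gaussianPDFReal m₂ v x) :=
    ((measurable_gaussianPDFReal m₁ v).div (measurable_gaussianPDFReal m₂ v)).ennreal_ofReal
  have h1 : gaussianReal m₁ v = (gaussianReal m₂ v).withDensity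
      (fun x => ENNReal.ofReal (gaussianPDFReal m₁ v x / gaussianPDFReal m₂ v x)) := by
    rw [gaussianReal_of_var_ne_zero _ hv, gaussianReal_of_var_ne_zero _ hv,
      ← withDensity_mul _ (measurable_gaussianPDF m₂ v) hf]
    congr 1
    ext x
    simp only [Pi.mul_apply, gaussianPDF]
    rw [← ENNReal.ofReal_mul (gaussianPDFReal_nonneg _ _ _),
      mul_div_cancel₀ _ (gaussianPDFReal_pos m₂ v x hv).ne']
  rw [h1]
  exact Measure.rnDeriv_withDensity _ hf

lemma integral_ratio_gaussian (m₁ m₂ : ℝ) {v : NNReal} (hv : v ≠ 0) (α : ℝ) :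
    ∫ x, (gaussianPDFReal m₁ v x / gaussianPDFReal m₂ v x) ^ α ∂(gaussianReal m₂ v)
      = rexp (α * (α - 1) * (m₁ - m₂) ^ 2 / (2 * v)) := by
  have hvpos : (0:ℝ) < v := lt_of_le_of_ne (v.coe_nonneg) (by exact_mod_cast (Ne.symm hv))
  have hmeas : Measurable fun x => (gaussianPDFReal m₂ v x).toNNReal :=
    (measurable_gaussianPDFReal m₂ v).real_toNNReal
  have hν : gaussianReal m₂ v
      = volume.withDensity (fun x => ((gaussianPDFReal m₂ v x).toNNReal : ENNReal)) := by
    rw [gaussianReal_of_var_ne_zero _ hv]; rfl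
  rw [hν, integral_withDensity_eq_integral_smul hmeas]
  have hc : (0:ℝ) < √(2 * π * v) := by positivity
  set C : ℝ := α * (α - 1) * (m₁ - m₂) ^ 2 / (2 * v) with hC
  set m : ℝ := α * m₁ + (1 - α) * m₂ with hmdef
  have key : ∀ x : ℝ, (gaussianPDFReal m₂ v x).toNNReal
        • (gaussianPDFReal m₁ v x / gaussianPDFReal m₂ v x) ^ α
      = rexp C * gaussianPDFReal m v x := by
    intro x
    rw [NNReal.smul_def, Real.coe_toNNReal _ (gaussianPDFReal_nonneg _ _ _)]
    simp only [gaussianPDFReal]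
    rw [mul_div_mul_left _ _ (by positivity : (√(2 * π * (v:ℝ)))⁻¹ ≠ 0),
      ← Real.exp_sub, ← Real.exp_mul]
    rw [smul_eq_mul, mul_assoc, ← Real.exp_add]
    have harg : -(x - m₂) ^ 2 / (2 * (v:ℝ)) +
        (-(x - m₁) ^ 2 / (2 * (v:ℝ)) - -(x - m₂) ^ 2 / (2 * (v:ℝ))) * α
        = -(x - m) ^ 2 / (2 * (v:ℝ)) + C := by
      rw [hC, hmdef]
      field_simp
      ring
    rw [harg, Real.exp_add]
    ring
  simp_rw [key]
  rw [integral_const_mul, integral_gaussianPDFReal_eq_one m hv, mul_one]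

/-- RDP of the Gaussian mechanism: with sensitivity bound `s > 0` and noise multiplier `σ > 0`,
if `|m₁ − m₂| ≤ s` then `D_α(N(m₁, s²σ²) ‖ N(m₂, s²σ²)) ≤ α/(2σ²)`. -/
theorem renyiDiv_gaussian_mechanism (s σ : ℝ) (hs : 0 < s) (hσ : 0 < σ)
    (α : ℝ) (hα : 1 < α) (m₁ m₂ : ℝ) (hm : |m₁ - m₂| ≤ s) :
    renyiDiv α (gaussianReal m₁ (s ^ 2 * σ ^ 2).toNNReal)
        (gaussianReal m₂ (s ^ 2 * σ ^ 2).toNNReal) ≤ α / (2 * σ ^ 2) := by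
  set v : NNReal := (s ^ 2 * σ ^ 2).toNNReal with hvdef
  have hvr : (v : ℝ) = s ^ 2 * σ ^ 2 := Real.coe_toNNReal _ (by positivity)
  have hv0 : v ≠ 0 := by
    intro h
    rw [h] at hvr
    simp at hvr
    rcases hvr with h | h <;> nlinarith
  have hint : ∫ x, ((gaussianReal m₁ v).rnDeriv (gaussianReal m₂ v) x).toReal ^ α
        ∂(gaussianReal m₂ v)
      = ∫ x, (gaussianPDFReal m₁ v x / gaussianPDFReal m₂ v x) ^ α ∂(gaussianReal m₂ v) := by
    refine integral_congr_ae ((rnDeriv_gaussian_gaussian m₁ m₂ hv0).mono fun x hx => ?_)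
    simp only [hx]
    rw [ENNReal.toReal_ofReal
      (div_nonneg (gaussianPDFReal_nonneg _ _ _) (gaussianPDFReal_nonneg _ _ _))]
  rw [renyiDiv, hint, integral_ratio_gaussian m₁ m₂ hv0 α, Real.log_exp]
  have hd : (m₁ - m₂) ^ 2 ≤ s ^ 2 := by
    obtain ⟨h1, h2⟩ := abs_le.mp hm
    exact sq_le_sq' h1 h2
  have hα1 : α - 1 ≠ 0 := by linarith
  have heq : (α - 1)⁻¹ * (α * (α - 1) * (m₁ - m₂) ^ 2 / (2 * (v:ℝ)))
      = α * (m₁ - m₂) ^ 2 / (2 * (s ^ 2 * σ ^ 2)) := by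
    rw [hvr]
    field_simp
  rw [heq]
  have h2 : α / (2 * σ ^ 2) = α * s ^ 2 / (2 * (s ^ 2 * σ ^ 2)) := by
    field_simp
  rw [h2]
  gcongr
end

section
/- Fix n ∈ ℕ, α > 1, and 0 < δ < 1. For each t ∈ {0, …, n} let C_t > 0 and σ_t > 0, and let m_t, m'_t ∈ ℝ satisfy |m_t − m'_t| ≤ C_t. Let μ = ⊗_{t=0}^{n} N(m_t, C_t²σ_t²) and ν = ⊗_{t=0}^{n} N(m'_t, C_t²σ_t²) on ℝ^{n+1}. Then for every measurable set S ⊆ ℝ^{n+1}, μ(S) ≤ exp( ∑_{t=0}^{n} α/(2σ_t²) + log((α−1)/α) − (log δ + log α)/(α−1) ) · ν(S) + δ. -/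
open MeasureTheory Real ProbabilityTheory
open scoped ENNReal NNReal

/-- Fubini for finite products of probability measures applied to product functions. -/
lemma sad_lintegral_pi_prod : ∀ (n : ℕ) (ν : Fin n → Measure ℝ),
    (∀ i, IsProbabilityMeasure (ν i)) → ∀ (f : Fin n → ℝ → ℝ≥0∞), (∀ i, Measurable (f i)) →
    ∫⁻ x, ∏ i, f i (x i) ∂(Measure.pi ν) = ∏ i, ∫⁻ y, f i y ∂(ν i) := by
  intro n
  induction n with
  | zero =>
    intro ν hν f hf
    haveI := hν
    simp [lintegral_const]
  | succ n ih =>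
    intro ν hν f hf
    haveI := hν
    have hmp := measurePreserving_piFinSuccAbove ν 0
    have hg : Measurable fun p : ℝ × (Fin n → ℝ) => f 0 p.1 * ∏ j, f j.succ (p.2 j) := by
      exact ((hf 0).comp measurable_fst).mul
        (Finset.measurable_prod _ fun j _ => (hf j.succ).comp
          ((measurable_pi_apply j).comp measurable_snd))
    calc ∫⁻ x, ∏ i, f i (x i) ∂(Measure.pi ν)
        = ∫⁻ x, (fun p : ℝ × (Fin n → ℝ) => f 0 p.1 * ∏ j, f j.succ (p.2 j))
            ((MeasurableEquiv.piFinSuccAbove (fun _ => ℝ) 0) x) ∂(Measure.pi ν) := by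
          refine lintegral_congr fun x => ?_
          simp [MeasurableEquiv.piFinSuccAbove_apply, Fin.prod_univ_succ, Fin.removeNth,
            Fin.succAbove_zero, Fin.tail]
      _ = ∫⁻ p, f 0 p.1 * ∏ j, f j.succ (p.2 j)
            ∂((ν 0).prod (Measure.pi fun j => ν ((0 : Fin (n+1)).succAbove j))) :=
          hmp.lintegral_comp hg
      _ = ∏ i, ∫⁻ y, f i y ∂(ν i) := by
          rw [lintegral_prod _ hg.aemeasurable]
          simp only [Fin.succAbove_zero]
          have : ∀ a : ℝ, (∫⁻ b, f 0 a * ∏ j : Fin n, f j.succ (b j)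
              ∂(Measure.pi fun j : Fin n => ν (Fin.succ j)))
              = f 0 a * ∏ j : Fin n, ∫⁻ y, f j.succ y ∂(ν j.succ) := by
            intro a
            rw [lintegral_const_mul _ (Finset.measurable_prod _ fun j _ =>
              (hf j.succ).comp (measurable_pi_apply j)),
              ih (fun j => ν j.succ) (fun j => hν j.succ) (fun j => f j.succ) (fun j => hf j.succ)]
          simp_rw [this]
          rw [lintegral_mul_const _ (hf 0), Fin.prod_univ_succ]

/-- Product measure of densities is the density of products. -/
lemma sad_pi_withDensity_prod {n : ℕ} (ν : Fin n → Measure ℝ)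
    [hν : ∀ i, IsProbabilityMeasure (ν i)]
    (f : Fin n → ℝ → ℝ≥0∞) (hf : ∀ i, Measurable (f i))
    (hp : ∀ i, IsProbabilityMeasure ((ν i).withDensity (f i))) :
    Measure.pi (fun i => (ν i).withDensity (f i))
      = (Measure.pi ν).withDensity fun x => ∏ i, f i (x i) := by
  haveI := hp
  refine Measure.pi_eq fun s hs => ?_
  have hFm : Measurable fun x : Fin n → ℝ => ∏ i, f i (x i) :=
    Finset.measurable_prod _ fun i _ => (hf i).comp (measurable_pi_apply i)
  rw [withDensity_apply _ (MeasurableSet.univ_pi hs),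
    ← lintegral_indicator (MeasurableSet.univ_pi hs) _]
  have key : ∀ x : Fin n → ℝ, (Set.pi Set.univ s).indicator (fun x => ∏ i, f i (x i)) x
      = ∏ i, (s i).indicator (f i) (x i) := by
    intro x
    by_cases hx : x ∈ Set.pi Set.univ s
    · rw [Set.indicator_of_mem hx]
      exact Finset.prod_congr rfl fun i _ =>
        (Set.indicator_of_mem (hx i (Set.mem_univ i)) _).symm
    · rw [Set.indicator_of_notMem hx]
      have : ∃ i, x i ∉ s i := by simpa [Set.mem_pi] using hx
      obtain ⟨i, hi⟩ := this
      exact (Finset.prod_eq_zero (Finset.mem_univ i) (Set.indicator_of_notMem hi _)).symm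
  simp_rw [key]
  rw [sad_lintegral_pi_prod n ν hν (fun i => (s i).indicator (f i))
    (fun i => (hf i).indicator (hs i))]
  exact Finset.prod_congr rfl fun i _ => by
    rw [lintegral_indicator (hs i) _, withDensity_apply _ (hs i)]

/-- A Gaussian is the Gaussian with shifted mean weighted by the likelihood ratio. -/
lemma sad_gauss_ratio (m m' : ℝ) {v : ℝ≥0} (hv : v ≠ 0) :
    gaussianReal m v = (gaussianReal m' v).withDensity
      (fun x => ENNReal.ofReal (Real.exp (((x - m')^2 - (x - m)^2) / (2 * (v : ℝ))))) := by
  have hvpos : (0 : ℝ) < v := NNReal.coe_pos.mpr (pos_iff_ne_zero.mpr hv)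
  rw [gaussianReal_of_var_ne_zero m hv, gaussianReal_of_var_ne_zero m' hv,
    ← withDensity_mul _ (measurable_gaussianPDF _ _) (by measurability)]
  congr 1
  funext x
  simp only [Pi.mul_apply, gaussianPDF]
  rw [← ENNReal.ofReal_mul (gaussianPDFReal_nonneg _ _ _)]
  congr 1
  simp only [gaussianPDFReal]
  rw [mul_assoc (Real.sqrt (2 * π * (v:ℝ)))⁻¹, ← Real.exp_add]
  congr 1
  field_simp
  ring

/-- Rényi-type moment of the Gaussian likelihood ratio. -/
lemma sad_gauss_moment (m m' : ℝ) {v : ℝ≥0} (hv : v ≠ 0) (a : ℝ) :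
    ∫⁻ x, ENNReal.ofReal (Real.exp (a * (((x - m')^2 - (x - m)^2) / (2 * (v : ℝ)))))
        ∂(gaussianReal m' v)
      = ENNReal.ofReal (Real.exp (a * (a - 1) * (m - m')^2 / (2 * (v : ℝ)))) := by
  have hvpos : (0 : ℝ) < v := NNReal.coe_pos.mpr (pos_iff_ne_zero.mpr hv)
  rw [gaussianReal_of_var_ne_zero m' hv,
    lintegral_withDensity_eq_lintegral_mul _ (measurable_gaussianPDF _ _) (by measurability)]
  have key : ∀ x, (gaussianPDF m' v * fun x =>
        ENNReal.ofReal (Real.exp (a * (((x - m')^2 - (x - m)^2) / (2 * (v : ℝ)))))) x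
      = ENNReal.ofReal (Real.exp (a * (a - 1) * (m - m')^2 / (2 * (v : ℝ))))
        * gaussianPDF (m' + a * (m - m')) v x := by
    intro x
    simp only [Pi.mul_apply, gaussianPDF]
    rw [← ENNReal.ofReal_mul (gaussianPDFReal_nonneg _ _ _),
      ← ENNReal.ofReal_mul (Real.exp_nonneg _)]
    congr 1
    simp only [gaussianPDFReal]
    rw [mul_assoc (Real.sqrt (2 * π * (v:ℝ)))⁻¹, ← Real.exp_add,
      mul_left_comm (rexp (a * (a - 1) * (m - m') ^ 2 / (2 * (v:ℝ)))), ← Real.exp_add]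
    congr 1
    field_simp
    ring
  simp_rw [key]
  rw [lintegral_const_mul _ (measurable_gaussianPDF _ _),
    lintegral_gaussianPDF_eq_one _ hv, mul_one]

/-- Real-valued core of the RDP-to-DP conversion (paper's Lemma 1), via Young's inequality. -/
lemma sad_conv_real (α δ R Q : ℝ) (hα : 1 < α) (hδ0 : 0 < δ) (hQ : 0 ≤ Q) :
    Real.exp ((α - 1) * R / α) * Q ^ ((α - 1) / α)
      ≤ Real.exp (R + Real.log ((α - 1) / α) - (Real.log δ + Real.log α) / (α - 1)) * Q + δ := by
  have hα0 : (0 : ℝ) < α := lt_trans one_pos hα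
  have hα1 : (0 : ℝ) < α - 1 := sub_pos.mpr hα
  set γ : ℝ := (α - 1) / α with hγdef
  have hγ : 0 < γ := div_pos hα1 hα0
  set ε : ℝ := R + Real.log γ - (Real.log δ + Real.log α) / (α - 1) with hεdef
  set w : ℝ := γ * (ε - Real.log γ) with hwdef
  have hpq : Real.HolderConjugate (α / (α - 1)) α := by
    refine Real.holderConjugate_iff.mpr ⟨?_, ?_⟩
    · rw [lt_div_iff₀ hα1]; linarith
    · rw [inv_div]; field_simp; ring
  have young := Real.young_inequality_of_nonneg
    (mul_nonneg (Real.rpow_nonneg hQ γ) (Real.exp_nonneg w))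
    (div_nonneg (Real.exp_nonneg (γ * R)) (Real.exp_nonneg w)) hpq
  have hab : Q ^ γ * Real.exp w * (Real.exp (γ * R) / Real.exp w)
      = Real.exp ((α - 1) * R / α) * Q ^ γ := by
    have hgr : γ * R = (α - 1) * R / α := by rw [hγdef]; ring
    rw [hgr]
    field_simp
  have e1 : (Q ^ γ * Real.exp w) ^ (α / (α - 1)) / (α / (α - 1)) = Real.exp ε * Q := by
    have hγp : γ * (α / (α - 1)) = 1 := by rw [hγdef]; field_simp
    have hwp : w * (α / (α - 1)) = ε - Real.log γ := by
      rw [hwdef, hγdef]; field_simp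
    rw [Real.mul_rpow (Real.rpow_nonneg hQ γ) (Real.exp_nonneg w), ← Real.rpow_mul hQ, hγp,
      Real.rpow_one, ← Real.exp_mul, hwp, Real.exp_sub, Real.exp_log hγ, hγdef]
    field_simp
  have e2 : (Real.exp (γ * R) / Real.exp w) ^ α / α = δ := by
    rw [← Real.exp_sub, ← Real.exp_mul]
    have h2 : (γ * R - w) * α = Real.log δ + Real.log α := by
      rw [hwdef, hεdef, hγdef]; field_simp; ring
    rw [h2, Real.exp_add, Real.exp_log hδ0, Real.exp_log hα0, mul_div_assoc,
      div_self hα0.ne', mul_one]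
  calc Real.exp ((α - 1) * R / α) * Q ^ γ
      = Q ^ γ * Real.exp w * (Real.exp (γ * R) / Real.exp w) := hab.symm
    _ ≤ (Q ^ γ * Real.exp w) ^ (α / (α - 1)) / (α / (α - 1))
        + (Real.exp (γ * R) / Real.exp w) ^ α / α := young
    _ = Real.exp ε * Q + δ := by rw [e1, e2]

/-- `ℝ≥0∞` version of the RDP-to-DP conversion. -/
lemma sad_conv_ennreal (α δ R : ℝ) (hα : 1 < α) (hδ0 : 0 < δ) (B : ℝ≥0∞) (hB : B ≠ ⊤) :
    ENNReal.ofReal (Real.exp ((α - 1) * R / α)) * B ^ ((α - 1) / α)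
      ≤ ENNReal.ofReal
          (Real.exp (R + Real.log ((α - 1) / α) - (Real.log δ + Real.log α) / (α - 1))) * B
        + ENNReal.ofReal δ := by
  have hα0 : (0 : ℝ) < α := lt_trans one_pos hα
  have hγ : (0 : ℝ) ≤ (α - 1) / α := le_of_lt (div_pos (by linarith) hα0)
  set Q := B.toReal with hQdef
  have hQ : 0 ≤ Q := ENNReal.toReal_nonneg
  have hBQ : B = ENNReal.ofReal Q := (ENNReal.ofReal_toReal hB).symm
  rw [hBQ, ENNReal.ofReal_rpow_of_nonneg hQ hγ, ← ENNReal.ofReal_mul (Real.exp_nonneg _),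
    ← ENNReal.ofReal_mul (Real.exp_nonneg _), ← ENNReal.ofReal_add (by positivity) hδ0.le]
  exact ENNReal.ofReal_le_ofReal (sad_conv_real α δ R Q hα hδ0 hQ)

/-- Main theorem, stated for an abstract per-coordinate variance `v t = C t ^ 2 * σ t ^ 2`. -/
lemma sad_dpsgd_dp_aux (n : ℕ) (α : ℝ) (hα : 1 < α) (δ : ℝ) (hδ0 : 0 < δ)
    (C σ : Fin (n + 1) → ℝ) (hC : ∀ t, 0 < C t) (hσ : ∀ t, 0 < σ t)
    (m m' : Fin (n + 1) → ℝ) (hm : ∀ t, |m t - m' t| ≤ C t)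
    (v : Fin (n + 1) → ℝ≥0) (hv : ∀ t, (v t : ℝ) = (C t) ^ 2 * (σ t) ^ 2)
    (S : Set (Fin (n + 1) → ℝ)) (hS : MeasurableSet S) :
    (Measure.pi fun t => gaussianReal (m t) (v t)) S ≤
      ENNReal.ofReal
          (Real.exp ((∑ t : Fin (n + 1), α / (2 * (σ t) ^ 2)) + Real.log ((α - 1) / α)
            - (Real.log δ + Real.log α) / (α - 1)))
        * (Measure.pi fun t => gaussianReal (m' t) (v t)) S
      + ENNReal.ofReal δ := by
  have hα0 : (0 : ℝ) < α := lt_trans one_pos hα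
  have hα1 : (0 : ℝ) < α - 1 := sub_pos.mpr hα
  have hvpos : ∀ t, (0 : ℝ) < v t := fun t => by rw [hv t]; have := hC t; have := hσ t; positivity
  have hvne : ∀ t, v t ≠ 0 := fun t => by
    intro h; have := hvpos t; rw [h] at this; simp at this
  set g : Fin (n + 1) → ℝ → ℝ := fun t x => ((x - m' t)^2 - (x - m t)^2) / (2 * (v t : ℝ))
    with hgdef
  set f : Fin (n + 1) → ℝ → ℝ≥0∞ := fun t x => ENNReal.ofReal (Real.exp (g t x)) with hfdef
  have hfm : ∀ t, Measurable (f t) := fun t => by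
    apply Measurable.ennreal_ofReal; apply Real.measurable_exp.comp; fun_prop
  set ν := Measure.pi fun t => gaussianReal (m' t) (v t) with hνdef
  set F : (Fin (n + 1) → ℝ) → ℝ≥0∞ := fun x => ∏ t, f t (x t) with hFdef
  have hFm : Measurable F := Finset.measurable_prod _ fun t _ =>
    (hfm t).comp (measurable_pi_apply t)
  -- Step 1: μ = ν.withDensity F
  have h1 : Measure.pi (fun t => gaussianReal (m t) (v t)) = ν.withDensity F := by
    have hratio : (fun t => gaussianReal (m t) (v t))
        = fun t => (gaussianReal (m' t) (v t)).withDensity (f t) := by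
      funext t
      exact sad_gauss_ratio (m t) (m' t) (hvne t)
    rw [hratio]
    exact sad_pi_withDensity_prod _ f hfm fun t => by
      rw [← sad_gauss_ratio (m t) (m' t) (hvne t)]; infer_instance
  -- Step 2: μ S as an integral against ν
  have h2 : (Measure.pi fun t => gaussianReal (m t) (v t)) S
      = ∫⁻ x, (F * S.indicator (1 : (Fin (n+1) → ℝ) → ℝ≥0∞)) x ∂ν := by
    rw [h1, withDensity_apply _ hS, ← lintegral_indicator hS]
    refine lintegral_congr fun x => ?_
    by_cases hx : x ∈ S <;> simp [hx]
  -- Step 3: Hölder's inequality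
  have hq : Real.HolderConjugate α (α / (α - 1)) := by
    refine Real.holderConjugate_iff.mpr ⟨?_, ?_⟩
    · exact hα
    · rw [inv_div]; field_simp; ring
  have holder := ENNReal.lintegral_mul_le_Lp_mul_Lq ν hq hFm.aemeasurable
    (measurable_one.indicator hS).aemeasurable
  -- Step 4: the indicator integral
  have hT2 : (∫⁻ a, S.indicator (1 : (Fin (n+1) → ℝ) → ℝ≥0∞) a ^ (α / (α - 1)) ∂ν) = ν S := by
    have hind : ∀ a, S.indicator (1 : (Fin (n+1) → ℝ) → ℝ≥0∞) a ^ (α / (α - 1))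
        = S.indicator 1 a := by
      intro a
      by_cases ha : a ∈ S
      · simp [ha]
      · simp [ha, ENNReal.zero_rpow_of_pos (div_pos hα0 hα1)]
    simp_rw [hind]
    exact lintegral_indicator_one hS
  -- Step 5: the Rényi moment integral
  have hT1 : (∫⁻ a, F a ^ α ∂ν)
      = ∏ t, ENNReal.ofReal (Real.exp (α * (α - 1) * (m t - m' t)^2 / (2 * (v t : ℝ)))) := by
    have hFα : ∀ x, F x ^ α = ∏ t, ENNReal.ofReal (Real.exp (α * g t (x t))) := by
      intro x
      rw [hFdef]
      simp only
      rw [← ENNReal.ofReal_prod_of_nonneg (fun t _ => Real.exp_nonneg _), ← Real.exp_sum,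
        ENNReal.ofReal_rpow_of_pos (Real.exp_pos _), ← Real.exp_mul,
        ← ENNReal.ofReal_prod_of_nonneg (fun t _ => Real.exp_nonneg _), ← Real.exp_sum,
        Finset.sum_mul]
      congr 2
      exact Finset.sum_congr rfl fun t _ => mul_comm _ _
    simp_rw [hFα]
    rw [sad_lintegral_pi_prod (n+1) _ (fun t => inferInstance)
      (fun t x => ENNReal.ofReal (Real.exp (α * g t x)))
      (fun t => by apply Measurable.ennreal_ofReal; apply Real.measurable_exp.comp; fun_prop)]
    exact Finset.prod_congr rfl fun t _ => sad_gauss_moment (m t) (m' t) (hvne t) α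
  -- Step 6: bound the moment
  set R : ℝ := ∑ t : Fin (n + 1), α / (2 * (σ t) ^ 2) with hRdef
  have hT1le : (∫⁻ a, F a ^ α ∂ν) ≤ ENNReal.ofReal (Real.exp ((α - 1) * R)) := by
    rw [hT1, ← ENNReal.ofReal_prod_of_nonneg (fun t _ => Real.exp_nonneg _), ← Real.exp_sum]
    refine ENNReal.ofReal_le_ofReal (Real.exp_le_exp.mpr ?_)
    rw [hRdef, Finset.mul_sum]
    refine Finset.sum_le_sum fun t _ => ?_
    rw [hv t]
    have hd2 : (m t - m' t)^2 ≤ (C t)^2 := sq_le_sq' (neg_le_of_abs_le (hm t)) (le_of_abs_le (hm t))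
    have h1 : α * (α - 1) * (m t - m' t)^2 / (2 * ((C t)^2 * (σ t)^2))
        ≤ α * (α - 1) * (C t)^2 / (2 * ((C t)^2 * (σ t)^2)) := by
      gcongr
    refine h1.trans (le_of_eq ?_)
    have hCne : (C t) ≠ 0 := (hC t).ne'
    have hσne : (σ t) ≠ 0 := (hσ t).ne'
    field_simp
  -- Step 7: put everything together
  have step : (Measure.pi fun t => gaussianReal (m t) (v t)) S
      ≤ ENNReal.ofReal (Real.exp ((α - 1) * R / α)) * (ν S) ^ ((α - 1) / α) := by
    rw [h2]
    refine holder.trans ?_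
    rw [hT2]
    have hpow : (∫⁻ a, F a ^ α ∂ν) ^ (1 / α)
        ≤ ENNReal.ofReal (Real.exp ((α - 1) * R / α)) := by
      refine le_trans (ENNReal.rpow_le_rpow hT1le (by positivity)) (le_of_eq ?_)
      rw [ENNReal.ofReal_rpow_of_pos (Real.exp_pos _), ← Real.exp_mul, mul_one_div]
    have honediv : 1 / (α / (α - 1)) = (α - 1) / α := one_div_div _ _
    rw [honediv]
    exact mul_le_mul_left hpow _
  refine step.trans ?_
  exact sad_conv_ennreal α δ R hα hδ0 (ν S) (measure_ne_top ν S)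

/-- End-to-end privacy guarantee of SAD-DPSGD: for the products of the per-step Gaussian
mechanisms `N(m_t, C_t²σ_t²)` and `N(m'_t, C_t²σ_t²)` with per-step sensitivities
`|m_t − m' t| ≤ C_t`, every measurable `S ⊆ ℝ^{n+1}` satisfies
`μ S ≤ exp(∑_t α/(2σ_t²) + log((α−1)/α) − (log δ + log α)/(α−1)) · ν S + δ`. -/
theorem sad_dpsgd_dp (n : ℕ) (α : ℝ) (hα : 1 < α) (δ : ℝ) (hδ0 : 0 < δ) (hδ1 : δ < 1)
    (C σ : Fin (n + 1) → ℝ) (hC : ∀ t, 0 < C t) (hσ : ∀ t, 0 < σ t)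
    (m m' : Fin (n + 1) → ℝ) (hm : ∀ t, |m t - m' t| ≤ C t)
    (S : Set (Fin (n + 1) → ℝ)) (hS : MeasurableSet S) :
    (Measure.pi fun t => gaussianReal (m t) ((C t) ^ 2 * (σ t) ^ 2).toNNReal) S ≤
      ENNReal.ofReal
          (Real.exp ((∑ t : Fin (n + 1), α / (2 * (σ t) ^ 2)) + Real.log ((α - 1) / α)
            - (Real.log δ + Real.log α) / (α - 1)))
        * (Measure.pi fun t => gaussianReal (m' t) ((C t) ^ 2 * (σ t) ^ 2).toNNReal) S
      + ENNReal.ofReal δ :=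
  sad_dpsgd_dp_aux n α hα δ hδ0 C σ hC hσ m m' hm
    (fun t => ((C t) ^ 2 * (σ t) ^ 2).toNNReal)
    (fun t => Real.coe_toNNReal _ (by positivity)) S hS
end
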